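/- arXiv:2112.10032 — 2 statements merged into one kernel-verified Lean document; each statement's English description precedes it below -/
import Mathlib

section
/- Truncated discrete Laplace moment bounds: Fix τ ∈ ℕ and λ ∈ (0,1) with τ > ln(10)/ln(1/λ) - 1. Let DLap_τ(λ) be the distribution on {-τ,...,τ} with mass at v proportional to λ^{|v|}. Then E[η] = 0, E[η²] < 5/(1-λ)², and E[η⁴] < 60/(1-λ)⁴ for η ∼ DLap_τ(λ). -/
/-- Mass of the truncated discrete Laplace distribution `DLap_τ(λ)` at `v`:
`λ^{|v|} / (1 + 2∑_{j=1}^τ λ^j)` for `|v| ≤ τ`, and `0` otherwise. -/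
noncomputable def dlapTruncMass (lam : ℝ) (τ : ℕ) (v : ℤ) : ℝ :=
  if v.natAbs ≤ τ then lam ^ v.natAbs / (1 + 2 * ∑ j ∈ Finset.Icc 1 τ, lam ^ j) else 0

lemma sum_Icc_int_symm (g : ℤ → ℝ) (n : ℕ) :
    ∑ v ∈ Finset.Icc (-(n : ℤ)) (n : ℤ), g v
      = g 0 + ∑ k ∈ Finset.Icc 1 n, (g k + g (-k)) := by
  induction n with
  | zero => simp
  | succ n ih =>
    have h1 : Finset.Icc (-((n+1 : ℕ) : ℤ)) ((n+1 : ℕ) : ℤ)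
        = insert (-((n+1 : ℕ) : ℤ)) (insert ((n+1 : ℕ) : ℤ)
            (Finset.Icc (-(n : ℤ)) (n : ℤ))) := by
      ext v; simp only [Finset.mem_Icc, Finset.mem_insert]; omega
    have h2 : Finset.Icc 1 (n+1) = insert (n+1) (Finset.Icc 1 n) := by
      ext k; simp only [Finset.mem_Icc, Finset.mem_insert]; omega
    rw [h1, h2, Finset.sum_insert, Finset.sum_insert, Finset.sum_insert, ih]
    · push_cast; ring
    · simp only [Finset.mem_Icc]; omega
    · simp only [Finset.mem_Icc]; omega
    · simp only [Finset.mem_insert, Finset.mem_Icc]; omega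

lemma geom_id (x : ℝ) (n : ℕ) :
    (1 - x) * ∑ j ∈ Finset.Icc 1 n, x ^ j = x - x ^ (n+1) := by
  induction n with
  | zero => simp
  | succ n ih =>
    rw [show Finset.Icc 1 (n+1) = insert (n+1) (Finset.Icc 1 n) by
      ext k; simp only [Finset.mem_Icc, Finset.mem_insert]; omega,
      Finset.sum_insert (by simp only [Finset.mem_Icc]; omega), mul_add, ih]
    ring

noncomputable def Q2aux (m x : ℝ) : ℝ := m^2*(1-x)^2 + (2*m+1)*x*(1-x) + 2*x^2

noncomputable def Q4aux (m x : ℝ) : ℝ :=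
  m^4*(1-x)^4 + (4*m^3+6*m^2+4*m+1)*x*(1-x)^3 + (12*m^2+24*m+14)*x^2*(1-x)^2
    + (24*m+36)*x^3*(1-x) + 24*x^4

lemma sum2_id (x : ℝ) (n : ℕ) :
    (1 - x)^3 * ∑ k ∈ Finset.Icc 1 n, (k : ℝ)^2 * x ^ k
      = x*(1+x) - x^(n+1) * Q2aux ((n : ℝ)+1) x := by
  induction n with
  | zero => simp [Q2aux]; ring
  | succ n ih =>
    rw [show Finset.Icc 1 (n+1) = insert (n+1) (Finset.Icc 1 n) by
      ext k; simp only [Finset.mem_Icc, Finset.mem_insert]; omega,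
      Finset.sum_insert (by simp only [Finset.mem_Icc]; omega), mul_add, ih]
    simp only [Q2aux]; push_cast; ring

lemma sum4_id (x : ℝ) (n : ℕ) :
    (1 - x)^5 * ∑ k ∈ Finset.Icc 1 n, (k : ℝ)^4 * x ^ k
      = x*(1+11*x+11*x^2+x^3) - x^(n+1) * Q4aux ((n : ℝ)+1) x := by
  induction n with
  | zero => simp [Q4aux]; ring
  | succ n ih =>
    rw [show Finset.Icc 1 (n+1) = insert (n+1) (Finset.Icc 1 n) by
      ext k; simp only [Finset.mem_Icc, Finset.mem_insert]; omega,
      Finset.sum_insert (by simp only [Finset.mem_Icc]; omega), mul_add, ih]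
    simp only [Q4aux]; push_cast; ring

lemma Q2aux_nonneg {m x : ℝ} (hm : 0 ≤ m) (hx : 0 ≤ x) (hx1 : x ≤ 1) : 0 ≤ Q2aux m x := by
  have h1 : (0:ℝ) ≤ 1 - x := by linarith
  unfold Q2aux; positivity

lemma Q4aux_nonneg {m x : ℝ} (hm : 0 ≤ m) (hx : 0 ≤ x) (hx1 : x ≤ 1) : 0 ≤ Q4aux m x := by
  have h1 : (0:ℝ) ≤ 1 - x := by linarith
  unfold Q4aux; positivity

lemma pow_lt_tenth {lam : ℝ} (h0 : 0 < lam) (h1 : lam < 1) (τ : ℕ)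
    (hτ : (τ : ℝ) > Real.log 10 / Real.log (1 / lam) - 1) :
    lam ^ (τ + 1) < 1/10 := by
  have hL : 0 < Real.log (1 / lam) := by
    apply Real.log_pos
    rw [lt_div_iff₀ h0]; linarith
  have h2 : Real.log 10 < ((τ : ℝ) + 1) * Real.log (1 / lam) := by
    rw [← div_lt_iff₀ hL] at *
    linarith
  have h3 : Real.log 10 < Real.log ((1 / lam) ^ (τ + 1)) := by
    rw [Real.log_pow]; push_cast; linarith
  have h4 : (10 : ℝ) < (1 / lam) ^ (τ + 1) := by
    have := Real.exp_lt_exp.mpr h3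
    rwa [Real.exp_log (by norm_num), Real.exp_log (by positivity)] at this
  rw [div_pow, one_pow] at h4
  rw [lt_div_iff₀ (by norm_num : (0:ℝ) < 10)]
  have hp : 0 < lam ^ (τ + 1) := by positivity
  calc lam ^ (τ+1) * 10 < lam ^ (τ+1) * (1 / lam ^ (τ+1)) := by
        apply mul_lt_mul_of_pos_left h4 hp
    _ = 1 := by field_simp

lemma moment_eq (lam : ℝ) (τ : ℕ) (p : ℕ) (hp0 : p ≠ 0) (hpe : Even p) :
    ∑ v ∈ Finset.Icc (-(τ : ℤ)) (τ : ℤ), (v : ℝ)^p * dlapTruncMass lam τ v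
      = (2 * ∑ k ∈ Finset.Icc 1 τ, (k : ℝ)^p * lam ^ k)
          / (1 + 2 * ∑ j ∈ Finset.Icc 1 τ, lam ^ j) := by
  set D := 1 + 2 * ∑ j ∈ Finset.Icc 1 τ, lam ^ j with hD
  rw [sum_Icc_int_symm (fun v => (v : ℝ)^p * dlapTruncMass lam τ v) τ]
  have hg0 : ((0 : ℤ) : ℝ)^p * dlapTruncMass lam τ 0 = 0 := by
    simp [zero_pow hp0]
  have hterm : ∀ k ∈ Finset.Icc 1 τ,
      ((k : ℤ) : ℝ)^p * dlapTruncMass lam τ (k : ℤ)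
        + (Int.cast (-(k : ℤ)) : ℝ)^p * dlapTruncMass lam τ (-(k : ℤ))
      = 2 * ((k : ℝ)^p * lam ^ k) / D := by
    intro k hk
    have hk2 : k ≤ τ := (Finset.mem_Icc.mp hk).2
    have hm : dlapTruncMass lam τ (k : ℤ) = lam ^ k / D := by
      simp [dlapTruncMass, hk2, hD]
    have hm' : dlapTruncMass lam τ (-(k : ℤ)) = lam ^ k / D := by
      simp [dlapTruncMass, Int.natAbs_neg, hk2, hD]
    rw [hm, hm']
    push_cast
    rw [hpe.neg_pow]
    ring
  rw [Finset.sum_congr rfl hterm]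
  simp only [hg0, zero_add]
  rw [Finset.mul_sum, Finset.sum_div]

/-- moment bounds for the truncated discrete Laplace distribution.
If `τ > ln 10 / ln (1/λ) - 1` then `E[η] = 0`, `E[η²] < 5/(1-λ)²`, and
`E[η⁴] < 60/(1-λ)⁴` for `η ∼ DLap_τ(λ)`. -/
theorem stmt5 (τ : ℕ) (lam : ℝ) (h0 : 0 < lam) (h1 : lam < 1)
    (hτ : (τ : ℝ) > Real.log 10 / Real.log (1 / lam) - 1) :
    (∑ v ∈ Finset.Icc (-(τ : ℤ)) (τ : ℤ), (v : ℝ) * dlapTruncMass lam τ v) = 0 ∧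
    (∑ v ∈ Finset.Icc (-(τ : ℤ)) (τ : ℤ), (v : ℝ) ^ 2 * dlapTruncMass lam τ v)
      < 5 / (1 - lam) ^ 2 ∧
    (∑ v ∈ Finset.Icc (-(τ : ℤ)) (τ : ℤ), (v : ℝ) ^ 4 * dlapTruncMass lam τ v)
      < 60 / (1 - lam) ^ 4 := by
  have h1l : (0:ℝ) < 1 - lam := by linarith
  have hp10 : lam ^ (τ + 1) < 1/10 := pow_lt_tenth h0 h1 τ hτ
  have hppos : (0:ℝ) < lam ^ (τ + 1) := by positivity
  set T := ∑ j ∈ Finset.Icc 1 τ, lam ^ j with hTdef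
  set D := 1 + 2 * T with hDdef
  have hT : (1 - lam) * T = lam - lam ^ (τ+1) := geom_id lam τ
  have hTnn : 0 ≤ T := Finset.sum_nonneg fun j _ => by positivity
  have hDpos : 0 < D := by rw [hDdef]; linarith
  have hDT : (1 - lam) * D = 1 + lam - 2 * lam ^ (τ+1) := by
    rw [hDdef]; nlinarith [hT]
  set S2 := ∑ k ∈ Finset.Icc 1 τ, (k : ℝ)^2 * lam ^ k with hS2def
  set S4 := ∑ k ∈ Finset.Icc 1 τ, (k : ℝ)^4 * lam ^ k with hS4def
  have hS2le : (1 - lam)^3 * S2 ≤ lam * (1 + lam) := by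
    have hid := sum2_id lam τ
    have hq := Q2aux_nonneg (m := (τ : ℝ) + 1) (x := lam) (by positivity) h0.le h1.le
    nlinarith [mul_nonneg hppos.le hq]
  have hS4le : (1 - lam)^5 * S4 ≤ lam * (1 + 11*lam + 11*lam^2 + lam^3) := by
    have hid := sum4_id lam τ
    have hq := Q4aux_nonneg (m := (τ : ℝ) + 1) (x := lam) (by positivity) h0.le h1.le
    nlinarith [mul_nonneg hppos.le hq]
  refine ⟨?_, ?_, ?_⟩
  · rw [sum_Icc_int_symm (fun v => (v : ℝ) * dlapTruncMass lam τ v) τ]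
    have : ∀ k ∈ Finset.Icc 1 τ,
        ((k : ℤ) : ℝ) * dlapTruncMass lam τ (k : ℤ)
          + (Int.cast (-(k : ℤ)) : ℝ) * dlapTruncMass lam τ (-(k : ℤ)) = 0 := by
      intro k _
      have hm : dlapTruncMass lam τ (-(k : ℤ)) = dlapTruncMass lam τ (k : ℤ) := by
        simp [dlapTruncMass, Int.natAbs_neg]
      rw [hm]; push_cast; ring
    rw [Finset.sum_congr rfl this]
    simp
  · rw [moment_eq lam τ 2 (by norm_num) (by decide)]
    rw [← hTdef, ← hDdef, ← hS2def, div_lt_div_iff₀ hDpos (by positivity)]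
    have h5 : 5 * ((1 - lam) * D) - 2 * ((1 - lam)^3 * S2) > 0 := by
      rw [hDT]; nlinarith [hS2le, hp10]
    nlinarith [h5, h1l]
  · rw [moment_eq lam τ 4 (by norm_num) (by decide)]
    rw [← hTdef, ← hDdef, ← hS4def, div_lt_div_iff₀ hDpos (by positivity)]
    have hl2 : lam^2 < 1 := by nlinarith
    have hl3 : lam^3 < 1 := by nlinarith
    have hl4 : lam^4 < 1 := by nlinarith
    have h5 : 60 * ((1 - lam) * D) - 2 * ((1 - lam)^5 * S4) > 0 := by
      rw [hDT]; nlinarith [hS4le, hp10, hl2, hl3, hl4]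
    nlinarith [h5, h1l]
end

section
/- Infinite divisibility of the discrete Laplace distribution: For any n ∈ ℕ and ρ ∈ (0,1), if η⁺_1,...,η⁺_n, η⁻_1,...,η⁻_n are 2n independent samples from the Pólya (negative binomial) distribution with parameters (1/n, ρ), then ∑_{i=1}^n (η⁺_i - η⁻_i) is distributed as DLap(ρ), the discrete Laplace distribution on ℤ with mass at v proportional to ρ^{|v|}. -/
/-- Mass function of the Pólya (negative binomial) distribution with
parameters `(r, ρ)`: `P[X = k] = C(k+r-1, k) ρ^k (1-ρ)^r`, where the
generalized binomial coefficient is `∏_{i=0}^{k-1} (r+i)/(i+1)`. -/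
noncomputable def polyaMass (r ρ : ℝ) (k : ℕ) : ℝ :=
  (∏ i ∈ Finset.range k, (r + i) / (i + 1)) * ρ ^ k * Real.rpow (1 - ρ) r

/-- Mass function of the difference `η⁺ - η⁻` of two independent
`Polya(r, ρ)` samples. -/
noncomputable def polyaDiffMass (r ρ : ℝ) (v : ℤ) : ℝ :=
  ∑' k : ℕ, polyaMass r ρ k *
    (if 0 ≤ (k : ℤ) - v then polyaMass r ρ ((k : ℤ) - v).toNat else 0)

/-- `n`-fold convolution of a mass function on `ℤ` (the mass function of the
sum of `n` i.i.d. copies). -/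
noncomputable def nfold (A : ℤ → ℝ) : ℕ → ℤ → ℝ
  | 0 => fun v => if v = 0 then 1 else 0
  | n + 1 => fun v => ∑' w : ℤ, A w * nfold A n (v - w)



noncomputable def gb (r : ℝ) (k : ℕ) : ℝ := ∏ i ∈ Finset.range k, (r + i) / (i + 1)

lemma gb_zero (r : ℝ) : gb r 0 = 1 := by simp [gb]

lemma gb_succ (r : ℝ) (k : ℕ) : gb r (k + 1) = gb r k * ((r + k) / (k + 1)) := by
  rw [gb, gb, Finset.prod_range_succ]

lemma gb_mul (r : ℝ) (k : ℕ) : ((k : ℝ) + 1) * gb r (k + 1) = (r + k) * gb r k := by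
  rw [gb_succ]
  have : ((k : ℝ) + 1) ≠ 0 := by positivity
  field_simp

lemma gb_nonneg {r : ℝ} (hr : 0 ≤ r) (k : ℕ) : 0 ≤ gb r k := by
  apply Finset.prod_nonneg
  intro i _
  positivity

lemma gb_le_one {r : ℝ} (hr : 0 ≤ r) (hr1 : r ≤ 1) (k : ℕ) : gb r k ≤ 1 := by
  apply Finset.prod_le_one
  · intro i _; positivity
  · intro i _
    rw [div_le_one (by positivity)]
    linarith

lemma gb_vandermonde (r s : ℝ) (k : ℕ) :
    ∑ j ∈ Finset.range (k + 1), gb r j * gb s (k - j) = gb (r + s) k := by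
  induction k with
  | zero => simp [gb]
  | succ k ih =>
    have hk1 : ((k : ℝ) + 1) ≠ 0 := by positivity
    have key : ((k : ℝ) + 1) * ∑ j ∈ Finset.range (k + 2), gb r j * gb s (k + 1 - j)
        = (r + s + k) * ∑ j ∈ Finset.range (k + 1), gb r j * gb s (k - j) := by
      rw [Finset.mul_sum, Finset.mul_sum]
      have split : ∀ j ∈ Finset.range (k + 2),
          ((k : ℝ) + 1) * (gb r j * gb s (k + 1 - j))
          = ((j : ℝ) * gb r j) * gb s (k + 1 - j)
            + gb r j * (((k + 1 - j : ℕ) : ℝ) * gb s (k + 1 - j)) := by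
        intro j hj
        have hj' : j ≤ k + 1 := by simpa [Nat.lt_succ_iff] using Finset.mem_range.mp hj
        have : ((k + 1 - j : ℕ) : ℝ) = (k : ℝ) + 1 - j := by
          push_cast [Nat.cast_sub hj']
          ring
        rw [this]; ring
      rw [Finset.sum_congr rfl split, Finset.sum_add_distrib]
      have S1 : ∑ j ∈ Finset.range (k + 2), ((j : ℝ) * gb r j) * gb s (k + 1 - j)
          = ∑ i ∈ Finset.range (k + 1), ((r + i) * gb r i) * gb s (k - i) := by
        rw [Finset.sum_range_succ']
        simp only [Nat.cast_zero, zero_mul, zero_mul, add_zero]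
        apply Finset.sum_congr rfl
        intro i _
        have : ((i : ℝ) + 1) * gb r (i + 1) = (r + i) * gb r i := gb_mul r i
        have h2 : k + 1 - (i + 1) = k - i := by omega
        rw [h2]
        push_cast
        rw [this]
      have S2 : ∑ j ∈ Finset.range (k + 2), gb r j * (((k + 1 - j : ℕ) : ℝ) * gb s (k + 1 - j))
          = ∑ j ∈ Finset.range (k + 1), gb r j * ((s + ((k : ℝ) - j)) * gb s (k - j)) := by
        rw [Finset.sum_range_succ]
        simp only [Nat.sub_self, Nat.cast_zero, zero_mul, mul_zero, add_zero]
        apply Finset.sum_congr rfl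
        intro j hj
        have hj' : j ≤ k := by simpa [Nat.lt_succ_iff] using Finset.mem_range.mp hj
        have h2 : k + 1 - j = (k - j) + 1 := by omega
        have h3 : ((k - j : ℕ) : ℝ) = (k : ℝ) - j := by
          push_cast [Nat.cast_sub hj']; ring
        rw [h2, Nat.cast_add, Nat.cast_one, gb_mul s (k - j), h3]
      rw [S1, S2, ← Finset.sum_add_distrib]
      apply Finset.sum_congr rfl
      intro j _
      ring
    have goal_mul : ((k : ℝ) + 1) * ∑ j ∈ Finset.range (k + 2), gb r j * gb s (k + 1 - j)
        = ((k : ℝ) + 1) * gb (r + s) (k + 1) := by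
      rw [key, ih, gb_mul]
    exact mul_left_cancel₀ hk1 goal_mul



lemma polyaMass_eq (r ρ : ℝ) (k : ℕ) :
    polyaMass r ρ k = gb r k * ρ ^ k * (1 - ρ) ^ r := rfl

lemma polyaMass_nonneg {r ρ : ℝ} (hr : 0 ≤ r) (hρ : 0 ≤ ρ) (hρ1 : ρ ≤ 1) (k : ℕ) :
    0 ≤ polyaMass r ρ k := by
  rw [polyaMass_eq]
  have h1 := gb_nonneg hr k
  have h2 : (0:ℝ) ≤ (1 - ρ) ^ r := Real.rpow_nonneg (by linarith) r
  positivity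

lemma polyaMass_le {r ρ : ℝ} (hr : 0 ≤ r) (hr1 : r ≤ 1) (hρ : 0 ≤ ρ) (hρ1 : ρ ≤ 1) (k : ℕ) :
    polyaMass r ρ k ≤ ρ ^ k := by
  rw [polyaMass_eq]
  have h1 := gb_nonneg hr k
  have h2 := gb_le_one hr hr1 k
  have h3 : (1 - ρ) ^ r ≤ (1:ℝ) := Real.rpow_le_one (by linarith) (by linarith) hr
  have h4 : (0:ℝ) ≤ (1 - ρ) ^ r := Real.rpow_nonneg (by linarith) r
  have h5 : (0:ℝ) ≤ ρ ^ k := by positivity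
  calc gb r k * ρ ^ k * (1 - ρ) ^ r ≤ (1:ℝ) * ρ ^ k * 1 := by
        apply mul_le_mul _ h3 h4 (by positivity)
        exact mul_le_mul h2 le_rfl h5 zero_le_one
    _ = ρ ^ k := by ring

lemma polya_conv (r s ρ : ℝ) (hρ1 : ρ < 1) (k : ℕ) :
    ∑ j ∈ Finset.range (k + 1), polyaMass r ρ j * polyaMass s ρ (k - j)
      = polyaMass (r + s) ρ k := by
  have hb : (0:ℝ) < 1 - ρ := by linarith
  have key : ∀ j ∈ Finset.range (k + 1),
      polyaMass r ρ j * polyaMass s ρ (k - j)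
        = (gb r j * gb s (k - j)) * (ρ ^ k * (1 - ρ) ^ (r + s)) := by
    intro j hj
    have hj' : j ≤ k := by simpa [Nat.lt_succ_iff] using Finset.mem_range.mp hj
    rw [polyaMass_eq, polyaMass_eq, Real.rpow_add hb]
    have hpow : ρ ^ j * ρ ^ (k - j) = ρ ^ k := by
      rw [← pow_add]; congr 1; omega
    calc gb r j * ρ ^ j * (1 - ρ) ^ r * (gb s (k - j) * ρ ^ (k - j) * (1 - ρ) ^ s)
        = (gb r j * gb s (k - j)) * ((ρ ^ j * ρ ^ (k - j)) * ((1 - ρ) ^ r * (1 - ρ) ^ s)) := by ring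
      _ = (gb r j * gb s (k - j)) * (ρ ^ k * ((1 - ρ) ^ r * (1 - ρ) ^ s)) := by rw [hpow]
  rw [Finset.sum_congr rfl key, ← Finset.sum_mul, gb_vandermonde, polyaMass_eq]
  ring

lemma polyaMass_one {ρ : ℝ} (k : ℕ) : polyaMass 1 ρ k = ρ ^ k * (1 - ρ) := by
  rw [polyaMass_eq, Real.rpow_one]
  have : gb 1 k = 1 := by
    rw [gb]
    apply Finset.prod_eq_one
    intro i _
    rw [add_comm (1:ℝ) (i:ℝ), div_self (by positivity)]
  rw [this]
  ring

open scoped ENNReal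

noncomputable def posE (r ρ : ℝ) (v : ℤ) : ℝ≥0∞ :=
  if 0 ≤ v then ENNReal.ofReal (polyaMass r ρ v.toNat) else 0

noncomputable def negE (r ρ : ℝ) (v : ℤ) : ℝ≥0∞ := posE r ρ (-v)

noncomputable def convE (A B : ℤ → ℝ≥0∞) (v : ℤ) : ℝ≥0∞ := ∑' w : ℤ, A w * B (v - w)

noncomputable def nfoldE (A : ℤ → ℝ≥0∞) : ℕ → ℤ → ℝ≥0∞
  | 0 => fun v => if v = 0 then 1 else 0
  | n + 1 => fun v => ∑' w : ℤ, A w * nfoldE A n (v - w)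

lemma posE_neg {r ρ : ℝ} {v : ℤ} (hv : v < 0) : posE r ρ v = 0 := by
  rw [posE, if_neg (by omega)]

lemma tsum_int_nonneg_support (f : ℤ → ℝ≥0∞) (h : ∀ v < 0, f v = 0) :
    ∑' v : ℤ, f v = ∑' k : ℕ, f k := by
  symm
  apply Function.Injective.tsum_eq (g := fun k : ℕ => (k : ℤ))
  · intro a b hab
    simpa using hab
  · intro v hv
    rcases lt_or_ge v 0 with h' | h'
    · exact absurd (h v h') hv
    · exact ⟨v.toNat, show ((v.toNat : ℕ) : ℤ) = v by omega⟩

lemma convE_comm (A B : ℤ → ℝ≥0∞) : convE A B = convE B A := by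
  funext v
  rw [convE, convE, ← (Equiv.subLeft v).tsum_eq (fun w => B w * A (v - w))]
  apply tsum_congr
  intro w
  simp only [Equiv.subLeft_apply, sub_sub_cancel]
  rw [mul_comm]

lemma convE_assoc (A B C : ℤ → ℝ≥0∞) : convE (convE A B) C = convE A (convE B C) := by
  funext v
  rw [convE]
  have step1 : ∀ w : ℤ, convE A B w * C (v - w) = ∑' u : ℤ, A u * (B (w - u) * C (v - w)) := by
    intro w
    rw [convE, ← ENNReal.tsum_mul_right]
    exact tsum_congr fun u => mul_assoc _ _ _
  rw [tsum_congr step1, ENNReal.tsum_comm, convE]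
  apply tsum_congr
  intro u
  rw [ENNReal.tsum_mul_left, convE]
  congr 1
  rw [← (Equiv.addRight u).tsum_eq (fun w => B (w - u) * C (v - w))]
  apply tsum_congr
  intro w
  simp only [Equiv.coe_addRight]
  have e1 : w + u - u = w := by ring
  have e2 : v - (w + u) = v - u - w := by ring
  rw [e1, e2]

lemma posE_conv {r s ρ : ℝ} (hr : 0 ≤ r) (hs : 0 ≤ s) (hρ : 0 ≤ ρ) (hρ1 : ρ < 1) :
    convE (posE r ρ) (posE s ρ) = posE (r + s) ρ := by
  funext v
  rw [convE]
  by_cases hv : 0 ≤ v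
  · rw [tsum_int_nonneg_support _ (fun w hw => by rw [posE_neg hw, zero_mul])]
    rw [tsum_eq_sum (s := Finset.range (v.toNat + 1))
      (fun k hk => by
        have hk' : v.toNat + 1 ≤ k := by simpa [Finset.mem_range, not_lt] using hk
        rw [posE_neg (by omega : v - (k : ℤ) < 0), mul_zero])]
    have term_eq : ∀ j ∈ Finset.range (v.toNat + 1),
        posE r ρ (j : ℤ) * posE s ρ (v - j)
          = ENNReal.ofReal (polyaMass r ρ j * polyaMass s ρ (v.toNat - j)) := by
      intro j hj
      have hj' : j ≤ v.toNat := by simpa [Nat.lt_succ_iff] using Finset.mem_range.mp hj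
      rw [posE, posE, if_pos (by positivity), if_pos (by omega : (0:ℤ) ≤ v - j)]
      rw [show ((j:ℤ)).toNat = j by omega, show (v - (j:ℤ)).toNat = v.toNat - j by omega]
      rw [← ENNReal.ofReal_mul (polyaMass_nonneg hr hρ hρ1.le j)]
    rw [Finset.sum_congr rfl term_eq,
      ← ENNReal.ofReal_sum_of_nonneg (fun j _ => mul_nonneg
        (polyaMass_nonneg hr hρ hρ1.le j) (polyaMass_nonneg hs hρ hρ1.le _)),
      polya_conv r s ρ hρ1 v.toNat, posE, if_pos hv]
  · rw [posE, if_neg hv]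
    rw [ENNReal.tsum_eq_zero]
    intro w
    rcases lt_or_ge w 0 with hw | hw
    · rw [posE_neg hw, zero_mul]
    · rw [posE_neg (by omega : v - w < 0), mul_zero]

lemma negE_conv {r s ρ : ℝ} (hr : 0 ≤ r) (hs : 0 ≤ s) (hρ : 0 ≤ ρ) (hρ1 : ρ < 1) :
    convE (negE r ρ) (negE s ρ) = negE (r + s) ρ := by
  funext v
  rw [negE, ← posE_conv hr hs hρ hρ1, convE, convE]
  rw [← (Equiv.neg ℤ).tsum_eq (fun w => posE r ρ w * posE s ρ (-v - w))]
  apply tsum_congr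
  intro w
  simp only [Equiv.neg_apply, negE]
  congr 2
  ring

lemma tsum_convE (A B : ℤ → ℝ≥0∞) :
    ∑' v : ℤ, convE A B v = (∑' v : ℤ, A v) * (∑' v : ℤ, B v) := by
  calc ∑' v : ℤ, ∑' w : ℤ, A w * B (v - w)
      = ∑' w : ℤ, ∑' v : ℤ, A w * B (v - w) := ENNReal.tsum_comm
    _ = ∑' w : ℤ, A w * ∑' v : ℤ, B (v - w) := tsum_congr fun w => ENNReal.tsum_mul_left
    _ = ∑' w : ℤ, A w * ∑' v : ℤ, B v := by
        apply tsum_congr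
        intro w
        congr 1
        exact (Equiv.subRight w).tsum_eq B
    _ = (∑' w : ℤ, A w) * (∑' v : ℤ, B v) := ENNReal.tsum_mul_right

lemma nfoldE_succ (A : ℤ → ℝ≥0∞) (n : ℕ) : nfoldE A (n + 1) = convE A (nfoldE A n) := rfl

lemma tsum_nfoldE (A : ℤ → ℝ≥0∞) (n : ℕ) :
    ∑' v : ℤ, nfoldE A n v = (∑' v : ℤ, A v) ^ n := by
  induction n with
  | zero =>
    rw [pow_zero]
    exact (tsum_congr (fun v : ℤ => rfl)).trans (tsum_ite_eq (0 : ℤ) (fun _ => (1 : ℝ≥0∞)))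
  | succ n ih =>
    rw [nfoldE_succ]
    show ∑' v : ℤ, convE A (nfoldE A n) v = _
    rw [tsum_convE, ih, pow_succ, mul_comm]

lemma nfoldE_one (A : ℤ → ℝ≥0∞) : nfoldE A 1 = A := by
  funext v
  show ∑' w : ℤ, A w * (if v - w = 0 then 1 else 0) = A v
  have : ∀ w : ℤ, A w * (if v - w = 0 then 1 else 0) = if w = v then A v else 0 := by
    intro w
    rcases eq_or_ne w v with h | h
    · simp [h]
    · rw [if_neg (by omega : ¬ (v - w = 0)), if_neg h, mul_zero]
  rw [tsum_congr this]
  exact tsum_ite_eq v (fun _ => A v)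

lemma nfold_toReal (A' : ℤ → ℝ≥0∞) (hA : ∑' v : ℤ, A' v ≠ ⊤) :
    ∀ n v, nfold (fun w => (A' w).toReal) n v = (nfoldE A' n v).toReal := by
  intro n
  induction n with
  | zero =>
    intro v
    show (if v = 0 then (1:ℝ) else 0) = (if v = 0 then (1:ℝ≥0∞) else 0).toReal
    split <;> simp
  | succ n ih =>
    intro v
    have hAfin : ∀ w, A' w ≠ ⊤ := fun w => ne_top_of_le_ne_top hA (ENNReal.le_tsum w)
    have hnfin : ∀ u, nfoldE A' n u ≠ ⊤ := fun u =>
      ne_top_of_le_ne_top (tsum_nfoldE A' n ▸ ENNReal.pow_ne_top hA)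
        (ENNReal.le_tsum u)
    show (∑' w : ℤ, (A' w).toReal * nfold (fun w => (A' w).toReal) n (v - w)) = _
    have step : ∀ w : ℤ, (A' w).toReal * nfold (fun w => (A' w).toReal) n (v - w)
        = (A' w * nfoldE A' n (v - w)).toReal := by
      intro w
      rw [ih, ENNReal.toReal_mul]
    rw [tsum_congr step, ← ENNReal.tsum_toReal_eq
      (fun w => ENNReal.mul_ne_top (hAfin w) (hnfin (v - w)))]
    rfl

lemma tsum_posE_ne_top {r ρ : ℝ} (hr : 0 ≤ r) (hr1 : r ≤ 1) (h0 : 0 ≤ ρ) (h1 : ρ < 1) :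
    ∑' v : ℤ, posE r ρ v ≠ ⊤ := by
  rw [tsum_int_nonneg_support _ (fun w hw => posE_neg hw)]
  have hle : ∑' k : ℕ, posE r ρ (k : ℤ) ≤ ∑' k : ℕ, ENNReal.ofReal (ρ ^ k) := by
    apply ENNReal.tsum_le_tsum
    intro k
    rw [posE, if_pos (by positivity), show ((k:ℤ)).toNat = k by omega]
    exact ENNReal.ofReal_le_ofReal (polyaMass_le hr hr1 h0 h1.le k)
  refine ne_top_of_le_ne_top ?_ hle
  rw [← ENNReal.ofReal_tsum_of_nonneg (fun k => by positivity)
    (summable_geometric_of_lt_one h0 h1)]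
  exact ENNReal.ofReal_ne_top

lemma tsum_negE_eq {r ρ : ℝ} : ∑' v : ℤ, negE r ρ v = ∑' v : ℤ, posE r ρ v := by
  rw [show (fun v : ℤ => negE r ρ v) = fun v => posE r ρ (-v) from rfl]
  exact (Equiv.neg ℤ).tsum_eq (posE r ρ)

lemma diff_eq_conv {r ρ : ℝ} (v : ℤ) :
    convE (posE r ρ) (negE r ρ) v
      = ∑' k : ℕ, ENNReal.ofReal (polyaMass r ρ k) *
          (if 0 ≤ (k : ℤ) - v then ENNReal.ofReal (polyaMass r ρ ((k:ℤ) - v).toNat) else 0) := by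
  rw [convE]
  rw [tsum_int_nonneg_support _ (fun w hw => by rw [posE_neg hw, zero_mul])]
  apply tsum_congr
  intro k
  rw [negE, posE, if_pos (by positivity : (0:ℤ) ≤ (k:ℤ)), show ((k:ℤ)).toNat = k by omega]
  congr 1
  rw [show -(v - (k:ℤ)) = (k:ℤ) - v by ring, posE]

lemma polyaDiff_toReal {r ρ : ℝ} (hr : 0 ≤ r) (hρ : 0 ≤ ρ) (hρ1 : ρ ≤ 1) (v : ℤ) :
    polyaDiffMass r ρ v = (convE (posE r ρ) (negE r ρ) v).toReal := by
  rw [diff_eq_conv, ENNReal.tsum_toReal_eq (fun k => by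
    apply ENNReal.mul_ne_top ENNReal.ofReal_ne_top
    split
    · exact ENNReal.ofReal_ne_top
    · exact ENNReal.zero_ne_top)]
  rw [polyaDiffMass]
  apply tsum_congr
  intro k
  rw [ENNReal.toReal_mul, ENNReal.toReal_ofReal (polyaMass_nonneg hr hρ hρ1 k)]
  congr 1
  split
  · exact (ENNReal.toReal_ofReal (polyaMass_nonneg hr hρ hρ1 _)).symm
  · simp

lemma convE_sym (A : ℤ → ℝ≥0∞) (v : ℤ) :
    convE A (fun w => A (-w)) v = convE A (fun w => A (-w)) (-v) := by
  rw [convE, convE, ← (Equiv.addRight v).tsum_eq (fun w : ℤ => A w * A (-(v - w)))]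
  apply tsum_congr
  intro w
  simp only [Equiv.coe_addRight]
  have e1 : -(v - (w + v)) = w := by ring
  have e2 : -(-v - w) = w + v := by ring
  rw [e1, e2, mul_comm]

lemma geom_conv {ρ : ℝ} (h0 : 0 < ρ) (h1 : ρ < 1) (v : ℤ) :
    convE (posE 1 ρ) (negE 1 ρ) v
      = ENNReal.ofReal ((1 - ρ) / (1 + ρ) * ρ ^ v.natAbs) := by
  have main : ∀ v : ℤ, 0 ≤ v → convE (posE 1 ρ) (negE 1 ρ) v
      = ENNReal.ofReal ((1 - ρ) / (1 + ρ) * ρ ^ v.natAbs) := by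
    intro v hv
    rw [convE]
    have inj : Function.Injective (fun j : ℕ => v + (j : ℤ)) := by
      intro a b hab
      simpa using hab
    rw [← Function.Injective.tsum_eq inj (f := fun w : ℤ => posE 1 ρ w * negE 1 ρ (v - w))
      (by
        intro w hw
        simp only [Function.mem_support] at hw
        have hw1 : 0 ≤ w := by
          by_contra h
          exact hw (by rw [posE_neg (by omega), zero_mul])
        have hw2 : v ≤ w := by
          by_contra h
          refine hw ?_
          rw [negE, posE_neg (show -(v - w) < 0 by omega), mul_zero]
        exact ⟨(w - v).toNat, by simp; omega⟩)]
    have step : ∀ j : ℕ, posE 1 ρ (v + (j:ℤ)) * negE 1 ρ (v - (v + (j:ℤ)))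
        = ENNReal.ofReal ((ρ ^ v.toNat * ((1 - ρ) * (1 - ρ))) * (ρ ^ 2) ^ j) := by
      intro j
      rw [negE, show -(v - (v + (j:ℤ))) = (j:ℤ) by ring]
      rw [posE, posE, if_pos (by omega : (0:ℤ) ≤ v + j), if_pos (by omega : (0:ℤ) ≤ (j:ℤ))]
      rw [show (v + (j:ℤ)).toNat = v.toNat + j by omega, show ((j:ℤ)).toNat = j by omega]
      rw [polyaMass_one, polyaMass_one, ← ENNReal.ofReal_mul (mul_nonneg (by positivity) (by linarith))]
      congr 1
      rw [pow_add, ← pow_mul]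
      ring
    rw [tsum_congr step, ← ENNReal.ofReal_tsum_of_nonneg (fun j => mul_nonneg (mul_nonneg (by positivity) (mul_nonneg (by linarith) (by linarith))) (by positivity))
      ((summable_geometric_of_lt_one (by positivity) (by nlinarith)).mul_left _)]
    congr 1
    rw [tsum_mul_left, tsum_geometric_of_lt_one (by positivity) (by nlinarith)]
    rw [show v.natAbs = v.toNat by omega]
    have hρ2 : (1:ℝ) - ρ ^ 2 = (1 - ρ) * (1 + ρ) := by ring
    rw [hρ2]
    have hne1 : (1:ℝ) - ρ ≠ 0 := by linarith
    have hne2 : (1:ℝ) + ρ ≠ 0 := by linarith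
    field_simp
  rcases le_or_gt 0 v with hv | hv
  · exact main v hv
  · have hsym : convE (posE 1 ρ) (negE 1 ρ) v = convE (posE 1 ρ) (negE 1 ρ) (-v) := by
      have : negE 1 ρ = fun w => posE 1 ρ (-w) := rfl
      rw [this]
      exact convE_sym (posE 1 ρ) v
    rw [hsym, main (-v) (by omega), Int.natAbs_neg]

lemma chainE {ρ : ℝ} (h0 : 0 ≤ ρ) (h1 : ρ < 1) (r : ℝ) (hr : 0 ≤ r) :
    ∀ m : ℕ, 1 ≤ m → nfoldE (convE (posE r ρ) (negE r ρ)) m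
      = convE (posE ((m : ℝ) * r) ρ) (negE ((m : ℝ) * r) ρ) := by
  intro m
  induction m with
  | zero => omega
  | succ m ih =>
    intro _
    rcases Nat.eq_zero_or_pos m with hm | hm
    · subst hm
      rw [nfoldE_one]
      norm_num
    · have ih' := ih hm
      rw [nfoldE_succ, ih']
      have hmr : (0:ℝ) ≤ (m : ℝ) * r := by positivity
      rw [convE_assoc, ← convE_assoc (negE r ρ), convE_comm (negE r ρ) (posE ((m:ℝ) * r) ρ),
        convE_assoc (posE ((m:ℝ) * r) ρ), ← convE_assoc (posE r ρ),
        posE_conv hr hmr h0 h1, negE_conv hr hmr h0 h1]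
      have : r + (m : ℝ) * r = ((m + 1 : ℕ) : ℝ) * r := by push_cast; ring
      rw [this]


/-- infinite divisibility of the discrete Laplace distribution.
The sum `∑_{i=1}^n (η⁺_i - η⁻_i)` of differences of `2n` independent
`Polya(1/n, ρ)` samples is distributed as `DLap(ρ)`. -/
theorem stmt11 (n : ℕ) (hn : 1 ≤ n) (ρ : ℝ) (h0 : 0 < ρ) (h1 : ρ < 1) :
    ∀ v : ℤ, nfold (polyaDiffMass (1 / n) ρ) n v
      = (1 - ρ) / (1 + ρ) * ρ ^ v.natAbs := by
  intro v
  have hn' : (0:ℝ) < n := by exact_mod_cast hn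
  have hr0 : (0:ℝ) ≤ 1 / n := by positivity
  have hr1 : (1:ℝ) / n ≤ 1 := by
    rw [div_le_one hn']
    exact_mod_cast hn
  have hfunc : polyaDiffMass (1 / (n:ℝ)) ρ
      = fun w => (convE (posE (1 / (n:ℝ)) ρ) (negE (1 / (n:ℝ)) ρ) w).toReal :=
    funext fun w => polyaDiff_toReal hr0 h0.le h1.le w
  rw [hfunc]
  have hDfin : ∑' w : ℤ, convE (posE (1 / (n:ℝ)) ρ) (negE (1 / (n:ℝ)) ρ) w ≠ ⊤ := by
    rw [tsum_convE]
    exact ENNReal.mul_ne_top (tsum_posE_ne_top hr0 hr1 h0.le h1)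
      (tsum_negE_eq ▸ tsum_posE_ne_top hr0 hr1 h0.le h1)
  rw [nfold_toReal _ hDfin n v]
  have hchain := chainE h0.le h1 (1 / (n:ℝ)) hr0 n hn
  rw [hchain]
  have hone : ((n:ℝ)) * (1 / n) = 1 := by field_simp
  rw [hone, geom_conv h0 h1 v, ENNReal.toReal_ofReal
    (mul_nonneg (div_nonneg (by linarith) (by linarith)) (by positivity))]
end
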